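/- Let k be a field, V a finite-dimensional k-vector space, S = GL(V), and H a closed algebraic subgroup of S. Let h_H be an H-equivariant pretheory over k, and let s ∈ S(k) be a k-rational point. Then the pull-back (μ_s)*_H : h_H(S) → h_H(S) induced by the right multiplication μ_s : S → S by s is the identity map. -/

import Mathlib

/-!
# Statement 1

Let `k` be a field, `V` a finite-dimensional `k`-vector space, `S = GL(V)`, and `H` a
closed algebraic subgroup of `S`.  Let `h_H` be an `H`-equivariant pretheory over `k`,
and let `s ∈ S(k)` be a `k`-rational point.  Then the pull-back
`(μ_s)*_H : h_H(S) → h_H(S)` induced by the right multiplication `μ_s : S → S` by `s` is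
the identity map.

We model the category of smooth `H`-varieties over `k` by an abstract category `C` with
a distinguished point, affine spaces and a class of (`H`-equivariant) open embeddings.
The geometric facts recorded as hypotheses are: `S = GL(V)` sits as an `H`-equivariant
open subvariety of the affine space `End_k(V) ≅ 𝔸^{(dim V)²}` compatibly with the
structure maps (hypotheses `hι`, `hfac`), and right multiplication `μ_s` by the rational
point `s ∈ S(k)` is `H`-equivariant and commutes with the structure map `φ : S → pt`,
i.e. `φ ∘ μ_s = φ` (hypothesis `hμ`).
-/

open CategoryTheory

universe u v w

/-- An abstract model of the category of smooth `H`-varieties over a field `k` (for an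
algebraic group `H`): a category equipped with a distinguished point `pt = Spec k` (with
trivial `H`-action), affine spaces `𝔸ⁿ_k` with their structure morphisms to the point,
and a distinguished class of (`H`-equivariant) open embeddings. -/
class SmoothHVarieties (C : Type u) [Category.{v} C] : Type (max u v) where
  /-- the point `Spec k` with trivial `H`-action -/
  pt : C
  /-- the affine space `𝔸ⁿ_k` -/
  aff : ℕ → C
  /-- the structure morphism `𝔸ⁿ_k → pt` -/
  affStruct : ∀ n : ℕ, aff n ⟶ pt
  /-- the class of `H`-equivariant open embeddings -/
  IsOpenEmbedding : ∀ {X Y : C}, (X ⟶ Y) → Prop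

open SmoothHVarieties

/-- An `H`-equivariant pretheory over `k` (Definition 2.1 of Gille–Zainoulline):
a contravariant functor `h_H` from the category of smooth `H`-varieties over `k` to
abelian groups satisfying (H) homotopy invariance and (L) localization. -/
structure EquivariantPretheory (C : Type u) [Category.{v} C] [SmoothHVarieties C] :
    Type (max u v (w + 1)) where
  /-- the underlying contravariant functor to abelian groups -/
  h : Cᵒᵖ ⥤ AddCommGrpCat.{w}
  /-- (H) homotopy invariance -/
  homotopy : ∀ n : ℕ, Function.Bijective ⇑(h.map (affStruct (C := C) n).op)
  /-- (L) localization -/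
  localization : ∀ {U X : C} (ι : U ⟶ X), IsOpenEmbedding ι →
    Function.Surjective ⇑(h.map ι.op)

/-- Lemma 4.2 of Gille–Zainoulline: for `S = GL(V)`, `H ⊆ S` a closed
subgroup, any `H`-equivariant pretheory `h_H` and any rational point `s ∈ S(k)`, the
pull-back `(μ_s)*_H : h_H(S) → h_H(S)` along the right multiplication `μ_s` by `s` is
the identity. -/
theorem right_multiplication_pullback_eq_id
    -- the base field `k` and the finite-dimensional `k`-vector space `V`
    (k : Type*) [Field k] (V : Type*) [AddCommGroup V] [Module k V] [FiniteDimensional k V]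
    -- the category of smooth `H`-varieties over `k`, for `H` a closed subgroup of `GL(V)`
    {C : Type u} [Category.{v} C] [SmoothHVarieties C]
    -- an `H`-equivariant pretheory over `k`
    (hH : EquivariantPretheory.{u, v, w} C)
    -- `S = GL(V)`, viewed as a smooth `H`-variety via left multiplication
    (S : C)
    -- the structure map `φ : S → pt`
    (φ : S ⟶ pt (C := C))
    -- `S = GL(V)` embeds `H`-equivariantly as an open subvariety of the affine space
    -- `End_k(V) ≅ 𝔸^{(dim V)²}_k`, compatibly with the structure maps to the point
    (ι : S ⟶ aff (C := C) (Module.finrank k V ^ 2))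
    (hι : IsOpenEmbedding (C := C) ι)
    (hfac : φ = ι ≫ affStruct (Module.finrank k V ^ 2))
    -- right multiplication `μ_s : S → S` by a rational point `s ∈ S(k)`; it is
    -- `H`-equivariant and satisfies `φ ∘ μ_s = φ` as morphisms over `k`
    (μs : S ⟶ S)
    (hμ : μs ≫ φ = φ) :
    hH.h.map μs.op = 𝟙 (hH.h.obj (Opposite.op S)) := by
  ext x
  -- every element of h(S) comes from h(aff) by localization
  obtain ⟨a, ha⟩ := hH.localization ι hι x
  -- every element of h(aff) comes from h(pt) by homotopy invariance
  obtain ⟨y, hy⟩ := (hH.homotopy (Module.finrank k V ^ 2)).2 a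
  have hx : x = hH.h.map φ.op y := by
    rw [hfac]
    simp only [op_comp, hH.h.map_comp, CategoryTheory.comp_apply, Function.comp_apply]
    rw [hy, ha]
  simp only [CategoryTheory.id_apply, id_eq]
  rw [hx, ← CategoryTheory.comp_apply, ← hH.h.map_comp, ← op_comp, hμ]
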